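/- Let T be a triangulated category with coproducts, B a compact object of T, and (A_n, f_n : A_n → A_{n+1}) an inductive system in T indexed by natural numbers, with homotopy colimit hocolim A_n defined by the triangle ⊕A_n → ⊕A_n → hocolim A_n (the first map being 1 − shift). Then the canonical map colim_n Hom_T(B, A_n) → Hom_T(B, hocolim A_n) is an isomorphism of abelian groups. -/

import Mathlib

open CategoryTheory Limits Pretriangulated ZeroObject

universe w v u

/-- An object `B` is compact if the canonical map `⊕ᵢ Hom(B, Xᵢ) → Hom(B, ∐ᵢ Xᵢ)` is
bijective for every family `(Xᵢ)`; concretely: every map `B ⟶ ∐ X` is a finite sum of maps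
factoring through the inclusions (surjectivity), and such a finite sum vanishes only if all
its components vanish (injectivity). -/
def IsCompactObj {C : Type u} [Category.{v} C] [Preadditive C] (B : C) : Prop :=
  ∀ (ι : Type w) (X : ι → C) [HasCoproduct X],
    (∀ u : B ⟶ ∐ X, ∃ (s : Finset ι) (v : ∀ i, B ⟶ X i),
        u = ∑ i ∈ s, v i ≫ Sigma.ι X i) ∧
    (∀ (s : Finset ι) (v : ∀ i, B ⟶ X i),
        (∑ i ∈ s, v i ≫ Sigma.ι X i) = 0 → ∀ i ∈ s, v i = 0)

/-- The composite `A n ⟶ A (n + k)` of the transition maps of an inductive system. -/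
def chainMap {C : Type u} [Category.{v} C] (A : ℕ → C) (f : ∀ n, A n ⟶ A (n + 1)) :
    ∀ (n k : ℕ), A n ⟶ A (n + k)
  | _, 0 => 𝟙 _
  | n, (k + 1) => chainMap A f n k ≫ f (n + k)

section Helpers

set_option linter.unusedSectionVars false

variable {C : Type u} [Category.{v} C] [Preadditive C]

/-- Compactness specialised to `ℕ`-indexed families. -/
lemma natCompact [HasCoproducts.{w} C] {B : C} (hB : IsCompactObj.{w} B)
    (Y : ℕ → C) [HasCoproduct Y] :
    (∀ u : B ⟶ ∐ Y, ∃ (s : Finset ℕ) (v : ∀ i, B ⟶ Y i),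
        u = ∑ i ∈ s, v i ≫ Sigma.ι Y i) ∧
    (∀ (s : Finset ℕ) (v : ∀ i, B ⟶ Y i),
        (∑ i ∈ s, v i ≫ Sigma.ι Y i) = 0 → ∀ i ∈ s, v i = 0) := by
  classical
  obtain ⟨hsurj, hinj⟩ := hB (ULift.{w} ℕ) (Y ∘ (Equiv.ulift.{w}))
  set r := Sigma.reindex (Equiv.ulift.{w} : ULift.{w} ℕ ≃ ℕ) Y with hr
  constructor
  · intro u
    obtain ⟨s, v, hv⟩ := hsurj (u ≫ r.inv)
    refine ⟨s.map (Equiv.ulift.{w}.toEmbedding), fun n => v ⟨n⟩, ?_⟩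
    rw [Finset.sum_map]
    have hu : u = (u ≫ r.inv) ≫ r.hom := by simp
    rw [hu, hv, Preadditive.sum_comp]
    refine Finset.sum_congr rfl fun i _ => ?_
    rw [Category.assoc]
    have hι : Sigma.ι (Y ∘ Equiv.ulift.{w}) i ≫ r.hom = Sigma.ι Y (Equiv.ulift.{w} i) :=
      Sigma.ι_reindex_hom _ _ _
    rw [hι]
    rfl
  · intro s v hv i hi
    have h0 : ∑ j ∈ s.map (Equiv.ulift.{w}.symm.toEmbedding),
        (fun j => v (Equiv.ulift.{w} j)) j ≫ Sigma.ι (Y ∘ Equiv.ulift.{w}) j = 0 := by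
      rw [Finset.sum_map]
      have hcong : ∀ j ∈ s, (fun j => v (Equiv.ulift.{w} j)) (Equiv.ulift.{w}.symm.toEmbedding j) ≫
          Sigma.ι (Y ∘ Equiv.ulift.{w}) (Equiv.ulift.{w}.symm.toEmbedding j)
          = v j ≫ Sigma.ι Y j ≫ r.inv := by
        intro j _
        congr 1
        exact (Sigma.ι_reindex_inv _ _ _).symm
      rw [Finset.sum_congr rfl hcong]
      simp only [← Category.assoc, ← Preadditive.sum_comp, hv, zero_comp]
    exact hinj _ (fun j => v (Equiv.ulift.{w} j)) h0 _ (Finset.mem_map_of_mem _ hi)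

/-- Uniqueness of finite-sum representations of maps into a coproduct. -/
lemma componentsEq {B : C} (Y : ℕ → C) [HasCoproduct Y]
    (hinj : ∀ (s : Finset ℕ) (v : ∀ i, B ⟶ Y i),
        (∑ i ∈ s, v i ≫ Sigma.ι Y i) = 0 → ∀ i ∈ s, v i = 0)
    (s t : Finset ℕ) (a b : ∀ i, B ⟶ Y i)
    (h : ∑ i ∈ s, a i ≫ Sigma.ι Y i = ∑ i ∈ t, b i ≫ Sigma.ι Y i) (i : ℕ) :
    (if i ∈ s then a i else 0) = (if i ∈ t then b i else 0) := by
  classical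
  have key : ∑ j ∈ s ∪ t,
      (fun j => (if j ∈ s then a j else 0) - (if j ∈ t then b j else 0)) j ≫ Sigma.ι Y j = 0 := by
    have h1 : ∑ j ∈ s ∪ t, (if j ∈ s then a j else 0) ≫ Sigma.ι Y j
        = ∑ j ∈ s, a j ≫ Sigma.ι Y j := by
      rw [← Finset.sum_subset Finset.subset_union_left
        (fun x _ hx => by rw [if_neg hx, zero_comp])]
      exact Finset.sum_congr rfl fun x hx => by rw [if_pos hx]
    have h2 : ∑ j ∈ s ∪ t, (if j ∈ t then b j else 0) ≫ Sigma.ι Y j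
        = ∑ j ∈ t, b j ≫ Sigma.ι Y j := by
      rw [← Finset.sum_subset Finset.subset_union_right
        (fun x _ hx => by rw [if_neg hx, zero_comp])]
      exact Finset.sum_congr rfl fun x hx => by rw [if_pos hx]
    simp only [Preadditive.sub_comp, Finset.sum_sub_distrib, h1, h2, h, sub_self]
  by_cases hi : i ∈ s ∪ t
  · exact sub_eq_zero.mp (hinj _ _ key i hi)
  · rw [if_neg (fun h' => hi (Finset.mem_union_left _ h')),
      if_neg (fun h' => hi (Finset.mem_union_right _ h'))]

/-- The key combinatorial step: component equations for a "telescope" relation. -/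
lemma telescope {B : C} (Y : ℕ → C) [HasCoproduct Y]
    (hinj : ∀ (s : Finset ℕ) (v : ∀ i, B ⟶ Y i),
        (∑ i ∈ s, v i ≫ Sigma.ι Y i) = 0 → ∀ i ∈ s, v i = 0)
    (φ : ∀ n, Y n ⟶ Y (n + 1)) (s t : Finset ℕ) (w c : ∀ i, B ⟶ Y i)
    (h : ∑ i ∈ s, w i ≫ Sigma.ι Y i
        = ∑ j ∈ t, c j ≫ Sigma.ι Y j + ∑ i ∈ s, (w i ≫ φ i) ≫ Sigma.ι Y (i + 1)) :
    ((if 0 ∈ s then w 0 else 0) = (if 0 ∈ t then c 0 else 0)) ∧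
    (∀ k, (if (k + 1) ∈ s then w (k + 1) else 0)
        = (if (k + 1) ∈ t then c (k + 1) else 0) + (if k ∈ s then w k else 0) ≫ φ k) := by
  classical
  have hcomp : ∀ j, (if j ∈ s then w j else 0)
      = (if j ∈ t ∪ s.image (· + 1)
          then (fun j => (if j ∈ t then c j else 0)
            + (Nat.casesOn (motive := fun j => B ⟶ Y j) j 0
                fun k => (if k ∈ s then w k else 0) ≫ φ k)) j
          else 0) := by
    intro j
    refine componentsEq Y hinj s (t ∪ s.image (· + 1)) w
      (fun j => (if j ∈ t then c j else 0)
        + (Nat.casesOn (motive := fun j => B ⟶ Y j) j 0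
            fun k => (if k ∈ s then w k else 0) ≫ φ k)) ?_ j
    rw [h]
    have e1 : ∑ j ∈ t ∪ s.image (· + 1),
        (fun j => (if j ∈ t then c j else 0)
            + (Nat.casesOn (motive := fun j => B ⟶ Y j) j 0
                fun k => (if k ∈ s then w k else 0) ≫ φ k)) j ≫ Sigma.ι Y j
        = ∑ j ∈ t ∪ s.image (· + 1), (if j ∈ t then c j else 0) ≫ Sigma.ι Y j
          + ∑ j ∈ t ∪ s.image (· + 1),
              (Nat.casesOn (motive := fun j => B ⟶ Y j) j 0
                fun k => (if k ∈ s then w k else 0) ≫ φ k) ≫ Sigma.ι Y j := by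
      rw [← Finset.sum_add_distrib]
      exact Finset.sum_congr rfl fun j _ => by rw [Preadditive.add_comp]
    rw [e1]
    congr 1
    · rw [← Finset.sum_subset Finset.subset_union_left
        (fun x _ hx => by rw [if_neg hx, zero_comp])]
      exact (Finset.sum_congr rfl fun x hx => by rw [if_pos hx]).symm
    · rw [← Finset.sum_subset Finset.subset_union_right (fun x _ hx => ?_)]
      · rw [Finset.sum_image (fun x _ y _ hxy => by omega)]
        exact (Finset.sum_congr rfl fun i hi => by
          show (w i ≫ φ i) ≫ Sigma.ι Y (i + 1)
            = ((if i ∈ s then w i else 0) ≫ φ i) ≫ Sigma.ι Y (i + 1)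
          rw [if_pos hi])
      · match x with
        | 0 => exact zero_comp
        | (k + 1) =>
          have hk : k ∉ s := fun hk => hx (Finset.mem_image.mpr ⟨k, hk, rfl⟩)
          show ((if k ∈ s then w k else 0) ≫ φ k) ≫ Sigma.ι Y (k + 1) = 0
          rw [if_neg hk, zero_comp, zero_comp]
  constructor
  · have h0 := hcomp 0
    by_cases hm : (0 : ℕ) ∈ t ∪ s.image (· + 1)
    · rw [if_pos hm] at h0
      rw [h0]
      exact add_zero _
    · rw [if_neg hm] at h0
      rw [h0, if_neg (fun ht => hm (Finset.mem_union_left _ ht))]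
  · intro k
    have h1 := hcomp (k + 1)
    by_cases hm : (k + 1) ∈ t ∪ s.image (· + 1)
    · rw [if_pos hm] at h1
      exact h1
    · rw [if_neg hm] at h1
      have hk : k ∉ s := fun hk => hm (Finset.mem_union_right _ (Finset.mem_image.mpr ⟨k, hk, rfl⟩))
      rw [h1, if_neg (fun ht => hm (Finset.mem_union_left _ ht)), if_neg hk, zero_comp, add_zero]

/-- A finite sum of maps into a coproduct killed by `1 - shift` vanishes. -/
lemma telescopeZero {B : C} (Y : ℕ → C) [HasCoproduct Y]
    (hinj : ∀ (s : Finset ℕ) (v : ∀ i, B ⟶ Y i),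
        (∑ i ∈ s, v i ≫ Sigma.ι Y i) = 0 → ∀ i ∈ s, v i = 0)
    (φ : ∀ n, Y n ⟶ Y (n + 1)) (s : Finset ℕ) (w : ∀ i, B ⟶ Y i)
    (h : ∑ i ∈ s, w i ≫ Sigma.ι Y i = ∑ i ∈ s, (w i ≫ φ i) ≫ Sigma.ι Y (i + 1)) :
    ∀ i ∈ s, w i = 0 := by
  obtain ⟨h0, hsucc⟩ := telescope Y hinj φ s ∅ w (fun _ => 0) (by simpa using h)
  have hall : ∀ j, (if j ∈ s then w j else 0) = 0 := by
    intro j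
    induction j with
    | zero => simpa using h0
    | succ k ih => rw [hsucc k, ih]; simp
  intro i hi
  have := hall i
  rwa [if_pos hi] at this

lemma comp_eqToHom_ι {B Z : C} (A : ℕ → C) [HasCoproduct A] (g' : (∐ A) ⟶ Z)
    {m m' : ℕ} (hm : m = m') (hA : A m = A m') (p : B ⟶ A m) :
    p ≫ eqToHom hA ≫ Sigma.ι A m' ≫ g' = p ≫ Sigma.ι A m ≫ g' := by subst hm; simp

/-- A map into the shift of the coproduct killed by the shift of `1 - shift` vanishes. -/
lemma shift_vanish {C : Type u} [Category.{v} C] [Preadditive C] [HasShift C ℤ]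
    [(shiftFunctor C (1 : ℤ)).Additive] [(shiftFunctor C (1 : ℤ)).IsEquivalence]
    [HasCoproducts.{w} C] [HasCoproducts.{0} C]
    {B : C} (hB : IsCompactObj.{w} B)
    (A : ℕ → C) (f : ∀ n, A n ⟶ A (n + 1))
    (x : B ⟶ (shiftFunctor C (1 : ℤ)).obj (∐ A))
    (hx : x ≫ (shiftFunctor C (1 : ℤ)).map
        (Sigma.desc fun n => Sigma.ι A n - f n ≫ Sigma.ι A (n + 1)) = 0) :
    x = 0 := by
  classical
  obtain ⟨hsurj', hinj'⟩ := natCompact hB (fun n => (shiftFunctor C (1 : ℤ)).obj (A n))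
  have hiso : IsIso (sigmaComparison (shiftFunctor C (1 : ℤ)) A) := inferInstance
  obtain ⟨s, xc, hx'⟩ := hsurj' (x ≫ inv (sigmaComparison (shiftFunctor C (1 : ℤ)) A))
  have hxe : x = (∑ i ∈ s, xc i ≫ Sigma.ι (fun n => (shiftFunctor C (1 : ℤ)).obj (A n)) i)
      ≫ sigmaComparison (shiftFunctor C (1 : ℤ)) A := by
    rw [← hx', Category.assoc, IsIso.inv_hom_id, Category.comp_id]
  have hkey : ∀ i, Sigma.ι (fun n => (shiftFunctor C (1 : ℤ)).obj (A n)) i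
        ≫ sigmaComparison (shiftFunctor C (1 : ℤ)) A
        ≫ (shiftFunctor C (1 : ℤ)).map
            (Sigma.desc fun n => Sigma.ι A n - f n ≫ Sigma.ι A (n + 1))
      = Sigma.ι (fun n => (shiftFunctor C (1 : ℤ)).obj (A n)) i
          ≫ sigmaComparison (shiftFunctor C (1 : ℤ)) A
        - (shiftFunctor C (1 : ℤ)).map (f i)
          ≫ Sigma.ι (fun n => (shiftFunctor C (1 : ℤ)).obj (A n)) (i + 1)
          ≫ sigmaComparison (shiftFunctor C (1 : ℤ)) A := by
    intro i
    rw [← Category.assoc, ι_comp_sigmaComparison, ← Functor.map_comp, Sigma.ι_desc,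
      Functor.map_sub, Functor.map_comp, ι_comp_sigmaComparison]
  have h1 : (∑ i ∈ s, xc i ≫ Sigma.ι (fun n => (shiftFunctor C (1 : ℤ)).obj (A n)) i)
      ≫ sigmaComparison (shiftFunctor C (1 : ℤ)) A
      ≫ (shiftFunctor C (1 : ℤ)).map
          (Sigma.desc fun n => Sigma.ι A n - f n ≫ Sigma.ι A (n + 1)) = 0 := by
    rw [← Category.assoc, ← hxe]
    exact hx
  have h2 : (∑ i ∈ s, xc i ≫ Sigma.ι (fun n => (shiftFunctor C (1 : ℤ)).obj (A n)) i)
      ≫ sigmaComparison (shiftFunctor C (1 : ℤ)) A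
      ≫ (shiftFunctor C (1 : ℤ)).map
          (Sigma.desc fun n => Sigma.ι A n - f n ≫ Sigma.ι A (n + 1))
      = (∑ i ∈ s, xc i ≫ Sigma.ι (fun n => (shiftFunctor C (1 : ℤ)).obj (A n)) i)
          ≫ sigmaComparison (shiftFunctor C (1 : ℤ)) A
        - (∑ i ∈ s, (xc i ≫ (shiftFunctor C (1 : ℤ)).map (f i))
            ≫ Sigma.ι (fun n => (shiftFunctor C (1 : ℤ)).obj (A n)) (i + 1))
          ≫ sigmaComparison (shiftFunctor C (1 : ℤ)) A := by
    simp only [Preadditive.sum_comp, Category.assoc, hkey, Preadditive.comp_sub,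
      Finset.sum_sub_distrib]
  have h3 : (∑ i ∈ s, xc i ≫ Sigma.ι (fun n => (shiftFunctor C (1 : ℤ)).obj (A n)) i)
      ≫ sigmaComparison (shiftFunctor C (1 : ℤ)) A
      = (∑ i ∈ s, (xc i ≫ (shiftFunctor C (1 : ℤ)).map (f i))
          ≫ Sigma.ι (fun n => (shiftFunctor C (1 : ℤ)).obj (A n)) (i + 1))
        ≫ sigmaComparison (shiftFunctor C (1 : ℤ)) A :=
    sub_eq_zero.mp (h2.symm.trans h1)
  have h4 : ∑ i ∈ s, xc i ≫ Sigma.ι (fun n => (shiftFunctor C (1 : ℤ)).obj (A n)) i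
      = ∑ i ∈ s, (xc i ≫ (shiftFunctor C (1 : ℤ)).map (f i))
          ≫ Sigma.ι (fun n => (shiftFunctor C (1 : ℤ)).obj (A n)) (i + 1) :=
    (cancel_mono (sigmaComparison (shiftFunctor C (1 : ℤ)) A)).mp h3
  have hall := telescopeZero (fun n => (shiftFunctor C (1 : ℤ)).obj (A n)) hinj'
    (fun n => (shiftFunctor C (1 : ℤ)).map (f n)) s xc h4
  rw [hxe, Finset.sum_eq_zero (fun i hi => by rw [hall i hi, zero_comp]), zero_comp]

end Helpers

/-- Let `T` be a triangulated category with coproducts, `B` a compact object,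
and `(Aₙ, fₙ : Aₙ → Aₙ₊₁)` an inductive system with homotopy colimit `H` defined by a
distinguished triangle `⊕Aₙ → ⊕Aₙ → H → (⊕Aₙ)[1]`, the first map being `1 − shift`.
Then the canonical map `colimₙ Hom_T(B, Aₙ) → Hom_T(B, H)` is an isomorphism of abelian
groups; concretely, it is surjective (every `B ⟶ H` factors through some `λₙ : Aₙ ⟶ H`)
and injective (a map `B ⟶ Aₙ` killed by `λₙ` dies at some finite stage of the colimit). -/
theorem compact_hom_hocolim_iso
    (C : Type u) [Category.{v} C] [Preadditive C] [HasZeroObject C] [HasShift C ℤ]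
    [∀ n : ℤ, (shiftFunctor C n).Additive] [Pretriangulated C]
    [HasCoproducts.{w} C] [HasCoproducts.{0} C]
    (B : C) (hB : IsCompactObj.{w} B)
    (A : ℕ → C) (f : ∀ n, A n ⟶ A (n + 1))
    -- the homotopy colimit `H`, given by a distinguished triangle on `1 - shift`
    (H : C) (g : (∐ A) ⟶ H) (h : H ⟶ (∐ A)⟦(1 : ℤ)⟧)
    (hH : Triangle.mk (Sigma.desc fun n => Sigma.ι A n - f n ≫ Sigma.ι A (n + 1)) g h
      ∈ distTriang C) :
    -- surjectivity of `colimₙ Hom(B, Aₙ) → Hom(B, H)`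
    (∀ u : B ⟶ H, ∃ (n : ℕ) (v : B ⟶ A n), v ≫ Sigma.ι A n ≫ g = u)
    -- injectivity of `colimₙ Hom(B, Aₙ) → Hom(B, H)`
    ∧ (∀ (n : ℕ) (v : B ⟶ A n), v ≫ Sigma.ι A n ≫ g = 0 →
        ∃ k : ℕ, v ≫ chainMap A f n k = 0) := by
  classical
  obtain ⟨hsurjA, hinjA⟩ := natCompact hB A
  have hι_d : ∀ n, Sigma.ι A n ≫ (Sigma.desc fun n => Sigma.ι A n - f n ≫ Sigma.ι A (n + 1))
      = Sigma.ι A n - f n ≫ Sigma.ι A (n + 1) := fun n => Sigma.ι_desc _ _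
  have hdg : (Sigma.desc fun n => Sigma.ι A n - f n ≫ Sigma.ι A (n + 1)) ≫ g = 0 :=
    comp_distTriang_mor_zero₁₂ _ hH
  have hstep : ∀ n, Sigma.ι A n ≫ g = f n ≫ Sigma.ι A (n + 1) ≫ g := by
    intro n
    have h1 : (Sigma.ι A n - f n ≫ Sigma.ι A (n + 1)) ≫ g = 0 := by
      rw [← hι_d n, Category.assoc, hdg, comp_zero]
    rw [Preadditive.sub_comp, sub_eq_zero, Category.assoc] at h1
    exact h1
  have chain_g : ∀ n k, Sigma.ι A n ≫ g = chainMap A f n k ≫ Sigma.ι A (n + k) ≫ g := by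
    intro n k
    induction k with
    | zero =>
      rw [show chainMap A f n 0 = 𝟙 (A n) from rfl, Category.id_comp]
      rfl
    | succ k ih =>
      rw [ih, hstep (n + k),
        show chainMap A f n (k + 1) = chainMap A f n k ≫ f (n + k) from rfl, Category.assoc]
      rfl
  constructor
  · -- surjectivity
    intro u
    have h31 : h ≫ (shiftFunctor C (1 : ℤ)).map
        (Sigma.desc fun n => Sigma.ι A n - f n ≫ Sigma.ι A (n + 1)) = 0 :=
      comp_distTriang_mor_zero₃₁ _ hH
    have hxzero : u ≫ h = 0 :=
      shift_vanish hB A f (u ≫ h) (by rw [Category.assoc, h31, comp_zero])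
    obtain ⟨wm, hw⟩ : ∃ wm : B ⟶ ∐ A, u = wm ≫ g := Triangle.coyoneda_exact₃ _ hH u hxzero
    obtain ⟨s, wc, hwc⟩ := hsurjA wm
    refine ⟨s.sup id, ∑ i ∈ s.attach, wc i.1 ≫ chainMap A f i.1 (s.sup id - i.1) ≫
      eqToHom (congrArg A (Nat.add_sub_cancel' (Finset.le_sup (f := id) i.2))), ?_⟩
    calc (∑ i ∈ s.attach, wc i.1 ≫ chainMap A f i.1 (s.sup id - i.1) ≫
          eqToHom (congrArg A (Nat.add_sub_cancel' (Finset.le_sup (f := id) i.2))))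
          ≫ Sigma.ι A (s.sup id) ≫ g
        = ∑ i ∈ s.attach, wc i.1 ≫ Sigma.ι A i.1 ≫ g := by
          rw [Preadditive.sum_comp]
          refine Finset.sum_congr rfl fun i _ => ?_
          rw [Category.assoc, Category.assoc,
            comp_eqToHom_ι A g (show i.1 + (s.sup id - i.1) = s.sup id from
              Nat.add_sub_cancel' (Finset.le_sup (f := id) i.2)),
            ← chain_g]
      _ = ∑ i ∈ s, wc i ≫ Sigma.ι A i ≫ g := Finset.sum_attach s (fun i => wc i ≫ Sigma.ι A i ≫ g)
      _ = wm ≫ g := by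
          rw [hwc, Preadditive.sum_comp]
          exact Finset.sum_congr rfl fun i _ => (Category.assoc _ _ _).symm
      _ = u := hw.symm
  · -- injectivity
    intro n v hv
    obtain ⟨wm, hw⟩ : ∃ wm : B ⟶ ∐ A, v ≫ Sigma.ι A n
        = wm ≫ (Sigma.desc fun n => Sigma.ι A n - f n ≫ Sigma.ι A (n + 1)) :=
      Triangle.coyoneda_exact₂ _ hH (v ≫ Sigma.ι A n)
      (by exact (Category.assoc _ _ _).trans hv)
    obtain ⟨s, wc, hwc⟩ := hsurjA wm
    set cfun : ∀ j, B ⟶ A j :=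
      fun j => if hj : j = n then v ≫ eqToHom (congrArg A hj.symm) else 0 with hcfun
    have hcn : cfun n = v := by rw [hcfun]; simp
    have heq : ∑ i ∈ s, wc i ≫ Sigma.ι A i
        = ∑ j ∈ ({n} : Finset ℕ), cfun j ≫ Sigma.ι A j
          + ∑ i ∈ s, (wc i ≫ f i) ≫ Sigma.ι A (i + 1) := by
      have hdw : wm ≫ (Sigma.desc fun n => Sigma.ι A n - f n ≫ Sigma.ι A (n + 1))
          = ∑ i ∈ s, wc i ≫ Sigma.ι A i - ∑ i ∈ s, (wc i ≫ f i) ≫ Sigma.ι A (i + 1) := by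
        rw [hwc, Preadditive.sum_comp, ← Finset.sum_sub_distrib]
        refine Finset.sum_congr rfl fun i _ => ?_
        rw [Category.assoc, hι_d i, Preadditive.comp_sub, ← Category.assoc]
      have hv' : v ≫ Sigma.ι A n
          = ∑ i ∈ s, wc i ≫ Sigma.ι A i - ∑ i ∈ s, (wc i ≫ f i) ≫ Sigma.ι A (i + 1) :=
        hw.trans hdw
      rw [Finset.sum_singleton, hcn, hv']
      abel
    obtain ⟨h0, hsucc⟩ := telescope A hinjA f s {n} wc cfun heq
    have Wlt : ∀ j, j < n → (if j ∈ s then wc j else 0) = 0 := by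
      intro j
      induction j with
      | zero =>
        intro hj
        rw [h0, if_neg (fun hm => by simp at hm; omega)]
      | succ k ih =>
        intro hj
        rw [hsucc k, ih (by omega), if_neg (fun hm => by simp at hm; omega), zero_comp, add_zero]
    have Wk : ∀ k, (if n + k ∈ s then wc (n + k) else 0) = v ≫ chainMap A f n k := by
      intro k
      induction k with
      | zero =>
        show (if n ∈ s then wc n else 0) = v ≫ chainMap A f n 0
        rw [show chainMap A f n 0 = 𝟙 (A n) from rfl, Category.comp_id]
        cases n with
        | zero => rw [h0, if_pos (Finset.mem_singleton_self 0), hcn]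
        | succ m =>
          rw [hsucc m, if_pos (Finset.mem_singleton_self (m + 1)), hcn, Wlt m (by omega),
            zero_comp, add_zero]
      | succ k ih =>
        show (if (n + k) + 1 ∈ s then wc ((n + k) + 1) else 0) = v ≫ chainMap A f n (k + 1)
        rw [hsucc (n + k), ih, if_neg (fun hm => by simp at hm; omega), zero_add,
          show chainMap A f n (k + 1) = chainMap A f n k ≫ f (n + k) from rfl,
          ← Category.assoc]
    refine ⟨s.sup id + 1, ?_⟩
    have hns : n + (s.sup id + 1) ∉ s := by
      intro hmem
      have := Finset.le_sup (f := id) hmem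
      simp only [id] at this
      omega
    have hfin := Wk (s.sup id + 1)
    rw [if_neg hns] at hfin
    exact hfin.symm
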